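/- Lemma (approximation by grid-supported signaling schemes): Let δ ∈ (0,1] with 1/δ ∈ ℤ, let λ ∈ Δ_M, and let α be a signaling scheme for λ of value v = Σ_μ α_μ val(μ). Then there exists a signaling scheme α' for λ supported on the grid S_δ whose value satisfies Σ_{μ' ∈ S_δ} α'_{μ'} val(μ') ≥ v − M·δ. -/

import Mathlib

open Finset

/-- The value of the Bayesian zero-sum game with payoff matrices `A θ` at
posterior `μ`: `val(μ) = max_{x ∈ Δ_r} min_{j ∈ [c]} (xᵀ A^μ)_j` where
`A^μ = ∑_θ μ_θ A^θ`. -/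
noncomputable def gameVal (M r c : ℕ) (A : Fin M → Matrix (Fin r) (Fin c) ℝ)
    (μ : Fin M → ℝ) : ℝ :=
  sSup {t : ℝ | ∃ x ∈ stdSimplex ℝ (Fin r),
    t = ⨅ j : Fin c, ∑ i : Fin r, x i * ∑ θ : Fin M, μ θ * A θ i j}

set_option maxHeartbeats 1000000

lemma gv_set_nonempty (M r c : ℕ) (hr : 0 < r) (A : Fin M → Matrix (Fin r) (Fin c) ℝ)
    (μ : Fin M → ℝ) :
    {t : ℝ | ∃ x ∈ stdSimplex ℝ (Fin r),
      t = ⨅ j : Fin c, ∑ i : Fin r, x i * ∑ θ : Fin M, μ θ * A θ i j}.Nonempty := by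
  refine ⟨_, fun _ => (r : ℝ)⁻¹, ⟨fun _ => by positivity, ?_⟩, rfl⟩
  have : (r : ℝ) ≠ 0 := Nat.cast_ne_zero.2 hr.ne'
  simp [Finset.sum_const, this]

lemma gv_set_bddAbove (M r c : ℕ) (hc : 0 < c) (A : Fin M → Matrix (Fin r) (Fin c) ℝ)
    (hA : ∀ θ i j, |A θ i j| ≤ 1) (μ : Fin M → ℝ) :
    BddAbove {t : ℝ | ∃ x ∈ stdSimplex ℝ (Fin r),
      t = ⨅ j : Fin c, ∑ i : Fin r, x i * ∑ θ : Fin M, μ θ * A θ i j} := by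
  refine ⟨∑ θ, |μ θ|, fun t ht => ?_⟩
  obtain ⟨x, hx, rfl⟩ := ht
  have hb : BddBelow (Set.range fun j : Fin c =>
      ∑ i : Fin r, x i * ∑ θ : Fin M, μ θ * A θ i j) :=
    (Set.finite_range _).bddBelow
  refine le_trans (ciInf_le hb ⟨0, hc⟩) ?_
  calc ∑ i : Fin r, x i * ∑ θ : Fin M, μ θ * A θ i ⟨0, hc⟩
      ≤ ∑ i : Fin r, x i * ∑ θ, |μ θ| := by
        refine Finset.sum_le_sum fun i _ => mul_le_mul_of_nonneg_left ?_ (hx.1 i)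
        refine le_trans (Finset.sum_le_sum fun θ _ => ?_)
          (le_refl (∑ θ, |μ θ|))
        calc μ θ * A θ i ⟨0, hc⟩ ≤ |μ θ * A θ i ⟨0, hc⟩| := le_abs_self _
          _ = |μ θ| * |A θ i ⟨0, hc⟩| := abs_mul _ _
          _ ≤ |μ θ| * 1 := mul_le_mul_of_nonneg_left (hA _ _ _) (abs_nonneg _)
          _ = |μ θ| := mul_one _
    _ = (∑ i : Fin r, x i) * ∑ θ, |μ θ| := by rw [Finset.sum_mul]
    _ = ∑ θ, |μ θ| := by rw [hx.2, one_mul]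

lemma gv_lipschitz (M r c : ℕ) (hr : 0 < r) (hc : 0 < c)
    (A : Fin M → Matrix (Fin r) (Fin c) ℝ) (hA : ∀ θ i j, |A θ i j| ≤ 1)
    (μ ν : Fin M → ℝ) :
    gameVal M r c A μ ≤ gameVal M r c A ν + ∑ θ, |μ θ - ν θ| := by
  set d := ∑ θ, |μ θ - ν θ| with hd
  refine csSup_le (gv_set_nonempty M r c hr A μ) ?_
  rintro t ⟨x, hx, rfl⟩
  have key : ∀ j : Fin c,
      ∑ i : Fin r, x i * ∑ θ : Fin M, μ θ * A θ i j ≤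
      (∑ i : Fin r, x i * ∑ θ : Fin M, ν θ * A θ i j) + d := by
    intro j
    have : ∑ i : Fin r, x i * ∑ θ : Fin M, μ θ * A θ i j
        - ∑ i : Fin r, x i * ∑ θ : Fin M, ν θ * A θ i j
        = ∑ i : Fin r, x i * ∑ θ : Fin M, (μ θ - ν θ) * A θ i j := by
      rw [← Finset.sum_sub_distrib]
      refine Finset.sum_congr rfl fun i _ => ?_
      rw [← mul_sub, ← Finset.sum_sub_distrib]
      congr 1
      refine Finset.sum_congr rfl fun θ _ => by ring
    have h2 : ∑ i : Fin r, x i * ∑ θ : Fin M, (μ θ - ν θ) * A θ i j ≤ d := by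
      calc ∑ i : Fin r, x i * ∑ θ : Fin M, (μ θ - ν θ) * A θ i j
          ≤ ∑ i : Fin r, x i * d := by
            refine Finset.sum_le_sum fun i _ => mul_le_mul_of_nonneg_left ?_ (hx.1 i)
            refine le_trans (Finset.sum_le_sum fun θ _ => ?_) (le_refl d)
            calc (μ θ - ν θ) * A θ i j ≤ |(μ θ - ν θ) * A θ i j| := le_abs_self _
              _ = |μ θ - ν θ| * |A θ i j| := abs_mul _ _
              _ ≤ |μ θ - ν θ| * 1 := mul_le_mul_of_nonneg_left (hA _ _ _) (abs_nonneg _)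
              _ = |μ θ - ν θ| := mul_one _
        _ = (∑ i : Fin r, x i) * d := by rw [Finset.sum_mul]
        _ = d := by rw [hx.2, one_mul]
    linarith
  have hb : BddBelow (Set.range fun j : Fin c =>
      ∑ i : Fin r, x i * ∑ θ : Fin M, μ θ * A θ i j) := (Set.finite_range _).bddBelow
  have h3 : (⨅ j : Fin c, ∑ i : Fin r, x i * ∑ θ : Fin M, μ θ * A θ i j)
      ≤ (⨅ j : Fin c, ∑ i : Fin r, x i * ∑ θ : Fin M, ν θ * A θ i j) + d := by
    haveI : Nonempty (Fin c) := ⟨⟨0, hc⟩⟩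
    rw [← sub_le_iff_le_add]
    refine le_ciInf fun j => ?_
    rw [sub_le_iff_le_add]
    exact le_trans (ciInf_le hb j) (key j)
  refine le_trans h3 ?_
  apply add_le_add_left
  exact le_csSup (gv_set_bddAbove M r c hc A hA ν) ⟨x, hx, rfl⟩



lemma hyper_aux (M : ℕ) (δ : ℝ) (hδ : 0 < δ) :
    ∀ (m : ℕ) (x : Fin M → ℝ),
      (univ.filter (fun θ => x θ ≠ 0 ∧ x θ ≠ δ)).card ≤ m →
      (∀ θ, 0 ≤ x θ) → (∀ θ, x θ ≤ δ) → (∃ n : ℤ, ∑ θ, x θ = n * δ) →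
      ∃ β : Finset (Fin M) → ℝ, (∀ S, 0 ≤ β S) ∧ (∑ S, β S = 1) ∧
        (∀ θ, ∑ S, β S * (if θ ∈ S then δ else 0) = x θ) ∧
        (∀ S, β S ≠ 0 → (S.card : ℝ) * δ = ∑ θ, x θ) := by
  intro m
  induction m with
  | zero =>
    intro x hcard hx0 hx1 _
    have hbdry : ∀ θ, x θ = 0 ∨ x θ = δ := by
      intro θ
      by_contra h
      push_neg at h
      have : θ ∈ univ.filter (fun θ => x θ ≠ 0 ∧ x θ ≠ δ) := by
        simp [h.1, h.2]
      have := Finset.card_pos.2 ⟨θ, this⟩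
      omega
    set S0 := univ.filter (fun θ => x θ = δ) with hS0
    refine ⟨fun S => if S = S0 then 1 else 0, fun S => by positivity, by simp, ?_, ?_⟩
    · intro θ
      rw [Finset.sum_eq_single S0 (fun S _ hS => by simp [hS]) (by simp)]
      have hmem : θ ∈ S0 ↔ x θ = δ := by simp [hS0]
      show (if S0 = S0 then (1:ℝ) else 0) * (if θ ∈ S0 then δ else 0) = x θ
      rw [if_pos rfl, one_mul]
      rcases hbdry θ with h | h
      · have hn : θ ∉ S0 := fun hh => (hδ.ne' (h ▸ hmem.1 hh).symm)
        rw [if_neg hn, h]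
      · rw [if_pos (hmem.2 h), h]
    · intro S hS
      have : S = S0 := by by_contra h; simp [h] at hS
      subst this
      rw [← Finset.sum_filter_add_sum_filter_not univ (fun θ => x θ = δ) x]
      have h1 : ∑ θ ∈ univ.filter (fun θ => x θ = δ), x θ = (S0.card : ℝ) * δ := by
        rw [Finset.sum_congr rfl (fun θ hθ => (Finset.mem_filter.1 hθ).2), Finset.sum_const,
          nsmul_eq_mul, hS0]
      have h2 : ∑ θ ∈ univ.filter (fun θ => ¬ x θ = δ), x θ = 0 := by
        refine Finset.sum_eq_zero fun θ hθ => ?_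
        rcases hbdry θ with h | h
        · exact h
        · exact absurd h (Finset.mem_filter.1 hθ).2
      rw [h1, h2, add_zero, hS0]
  | succ m ih =>
    intro x hcard hx0 hx1 hsum
    by_cases hle : (univ.filter (fun θ => x θ ≠ 0 ∧ x θ ≠ δ)).card ≤ m
    · exact ih x hle hx0 hx1 hsum
    -- the filter is nonempty
    have hpos : 0 < (univ.filter (fun θ => x θ ≠ 0 ∧ x θ ≠ δ)).card := by omega
    obtain ⟨a, ha⟩ := Finset.card_pos.1 hpos
    have haI : x a ≠ 0 ∧ x a ≠ δ := (Finset.mem_filter.1 ha).2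
    -- there is a second interior coordinate
    have hb : ∃ b, b ∈ univ.filter (fun θ => x θ ≠ 0 ∧ x θ ≠ δ) ∧ b ≠ a := by
      by_contra h
      push_neg at h
      have hFeq : univ.filter (fun θ => x θ ≠ 0 ∧ x θ ≠ δ) = {a} := by
        apply Finset.eq_singleton_iff_unique_mem.2
        exact ⟨ha, fun b hbmem => by
          by_contra hba; exact hba (h b hbmem)⟩
      obtain ⟨n, hn⟩ := hsum
      have hsplit : ∑ θ, x θ = x a + ∑ θ ∈ univ.erase a, x θ :=
        (Finset.add_sum_erase univ x (Finset.mem_univ a)).symm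
      have hrest : ∑ θ ∈ univ.erase a, x θ =
          (((univ.erase a).filter (fun θ => x θ = δ)).card : ℝ) * δ := by
        rw [← Finset.sum_filter_add_sum_filter_not (univ.erase a) (fun θ => x θ = δ) x]
        have h1 : ∑ θ ∈ (univ.erase a).filter (fun θ => x θ = δ), x θ
            = (((univ.erase a).filter (fun θ => x θ = δ)).card : ℝ) * δ := by
          rw [Finset.sum_congr rfl (fun θ hθ => (Finset.mem_filter.1 hθ).2),
            Finset.sum_const, nsmul_eq_mul]
        have h2 : ∑ θ ∈ (univ.erase a).filter (fun θ => ¬ x θ = δ), x θ = 0 := by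
          refine Finset.sum_eq_zero fun θ hθ => ?_
          have hθ' := Finset.mem_filter.1 hθ
          have hθa : θ ≠ a := Finset.ne_of_mem_erase hθ'.1
          by_contra hne
          have : θ ∈ univ.filter (fun θ => x θ ≠ 0 ∧ x θ ≠ δ) := by
            simp only [Finset.mem_filter, Finset.mem_univ, true_and]
            exact ⟨hne, hθ'.2⟩
          rw [hFeq, Finset.mem_singleton] at this
          exact hθa this
        rw [h1, h2, add_zero]
      set kk := ((univ.erase a).filter (fun θ => x θ = δ)).card with hkk
      have hxa : x a = ((n - kk : ℤ) : ℝ) * δ := by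
        push_cast
        rw [hsplit, hrest] at hn
        linarith
      have hxa0 : 0 < x a := lt_of_le_of_ne (hx0 a) (Ne.symm haI.1)
      have hxaδ : x a < δ := lt_of_le_of_ne (hx1 a) haI.2
      have h0 : (0 : ℝ) < ((n - kk : ℤ) : ℝ) := by
        by_contra hcon
        push_neg at hcon
        nlinarith
      have h1 : ((n - kk : ℤ) : ℝ) < 1 := by
        by_contra hcon
        push_neg at hcon
        nlinarith
      have : (0 : ℤ) < n - kk := by exact_mod_cast h0
      have : (n - kk : ℤ) < 1 := by exact_mod_cast h1
      omega
    obtain ⟨b, hbmem, hba⟩ := hb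
    have hbI : x b ≠ 0 ∧ x b ≠ δ := (Finset.mem_filter.1 hbmem).2
    have hxa0 : 0 < x a := lt_of_le_of_ne (hx0 a) (Ne.symm haI.1)
    have hxaδ : x a < δ := lt_of_le_of_ne (hx1 a) haI.2
    have hxb0 : 0 < x b := lt_of_le_of_ne (hx0 b) (Ne.symm hbI.1)
    have hxbδ : x b < δ := lt_of_le_of_ne (hx1 b) hbI.2
    set εp := min (δ - x a) (x b) with hεp
    set εm := min (x a) (δ - x b) with hεm
    have hεp0 : 0 < εp := lt_min (by linarith) hxb0
    have hεm0 : 0 < εm := lt_min hxa0 (by linarith)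
    set xp : Fin M → ℝ := fun θ => if θ = a then x a + εp else if θ = b then x b - εp else x θ with hxp
    set xm : Fin M → ℝ := fun θ => if θ = a then x a - εm else if θ = b then x b + εm else x θ with hxm
    have hab : a ≠ b := fun h => hba h.symm
    have hxpa : xp a = x a + εp := by simp [hxp]
    have hxpb : xp b = x b - εp := by simp [hxp, hba]
    have hxma : xm a = x a - εm := by simp [hxm]
    have hxmb : xm b = x b + εm := by simp [hxm, hba]
    have hxpo : ∀ θ, θ ≠ a → θ ≠ b → xp θ = x θ := by
      intro θ h1 h2; simp [hxp, h1, h2]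
    have hxmo : ∀ θ, θ ≠ a → θ ≠ b → xm θ = x θ := by
      intro θ h1 h2; simp [hxm, h1, h2]
    -- bounds for xp, xm
    have hεple1 : εp ≤ δ - x a := min_le_left _ _
    have hεple2 : εp ≤ x b := min_le_right _ _
    have hεmle1 : εm ≤ x a := min_le_left _ _
    have hεmle2 : εm ≤ δ - x b := min_le_right _ _
    have hxp0 : ∀ θ, 0 ≤ xp θ := by
      intro θ
      by_cases h1 : θ = a
      · subst h1; rw [hxpa]; linarith
      by_cases h2 : θ = b
      · subst h2; rw [hxpb]; linarith
      · rw [hxpo θ h1 h2]; exact hx0 θ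
    have hxp1 : ∀ θ, xp θ ≤ δ := by
      intro θ
      by_cases h1 : θ = a
      · subst h1; rw [hxpa]; linarith
      by_cases h2 : θ = b
      · subst h2; rw [hxpb]; linarith
      · rw [hxpo θ h1 h2]; exact hx1 θ
    have hxm0 : ∀ θ, 0 ≤ xm θ := by
      intro θ
      by_cases h1 : θ = a
      · subst h1; rw [hxma]; linarith
      by_cases h2 : θ = b
      · subst h2; rw [hxmb]; linarith
      · rw [hxmo θ h1 h2]; exact hx0 θ
    have hxm1 : ∀ θ, xm θ ≤ δ := by
      intro θ
      by_cases h1 : θ = a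
      · subst h1; rw [hxma]; linarith
      by_cases h2 : θ = b
      · subst h2; rw [hxmb]; linarith
      · rw [hxmo θ h1 h2]; exact hx1 θ
    -- sums preserved
    have sum_shift : ∀ (y : Fin M → ℝ) (e : ℝ),
        (y a = x a + e) → (y b = x b - e) → (∀ θ, θ ≠ a → θ ≠ b → y θ = x θ) →
        ∑ θ, y θ = ∑ θ, x θ := by
      intro y e hya hyb hyo
      have : ∀ θ, y θ = x θ + ((if θ = a then e else 0) + (if θ = b then -e else 0)) := by
        intro θ
        by_cases h1 : θ = a
        · subst h1; rw [hya, if_pos rfl, if_neg hab]; ring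
        by_cases h2 : θ = b
        · subst h2; rw [hyb, if_neg h1, if_pos rfl]; ring
        · rw [hyo θ h1 h2, if_neg h1, if_neg h2]; ring
      rw [Finset.sum_congr rfl (fun θ _ => this θ)]
      rw [Finset.sum_add_distrib, Finset.sum_add_distrib,
        Finset.sum_ite_eq' univ a (fun _ => e), Finset.sum_ite_eq' univ b (fun _ => -e)]
      simp
    have hsump : ∑ θ, xp θ = ∑ θ, x θ := sum_shift xp εp hxpa hxpb hxpo
    have hsumm : ∑ θ, xm θ = ∑ θ, x θ := by
      refine sum_shift xm (-εm) ?_ ?_ hxmo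
      · rw [hxma]; ring
      · rw [hxmb]; ring
    -- filter decreases
    have filter_sub : ∀ (y : Fin M → ℝ), (∀ θ, θ ≠ a → θ ≠ b → y θ = x θ) →
        ∀ (wit : Fin M), (y wit = 0 ∨ y wit = δ) → (wit = a ∨ wit = b) →
        (univ.filter (fun θ => y θ ≠ 0 ∧ y θ ≠ δ)).card ≤ m := by
      intro y hyo wit hwit hwitab
      have hsub : univ.filter (fun θ => y θ ≠ 0 ∧ y θ ≠ δ) ⊆
          (univ.filter (fun θ => x θ ≠ 0 ∧ x θ ≠ δ)).erase wit := by
        intro θ hθ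
        have hθ' := (Finset.mem_filter.1 hθ).2
        have hθwit : θ ≠ wit := by
          rintro rfl
          rcases hwit with h | h
          · exact hθ'.1 h
          · exact hθ'.2 h
        refine Finset.mem_erase.2 ⟨hθwit, ?_⟩
        simp only [Finset.mem_filter, Finset.mem_univ, true_and]
        by_cases h1 : θ = a
        · subst h1; exact haI
        by_cases h2 : θ = b
        · subst h2; exact hbI
        · rw [← hyo θ h1 h2]; exact hθ'
      calc (univ.filter (fun θ => y θ ≠ 0 ∧ y θ ≠ δ)).card
          ≤ ((univ.filter (fun θ => x θ ≠ 0 ∧ x θ ≠ δ)).erase wit).card :=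
            Finset.card_le_card hsub
        _ ≤ (univ.filter (fun θ => x θ ≠ 0 ∧ x θ ≠ δ)).card - 1 := by
            rcases hwitab with rfl | rfl
            · rw [Finset.card_erase_of_mem ha]
            · rw [Finset.card_erase_of_mem hbmem]
        _ ≤ m := by omega
    have hcardp : (univ.filter (fun θ => xp θ ≠ 0 ∧ xp θ ≠ δ)).card ≤ m := by
      rcases le_or_gt (δ - x a) (x b) with h | h
      · refine filter_sub xp hxpo a (Or.inr ?_) (Or.inl rfl)
        rw [hxpa, hεp, min_eq_left h]; ring
      · refine filter_sub xp hxpo b (Or.inl ?_) (Or.inr rfl)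
        rw [hxpb, hεp, min_eq_right h.le]; ring
    have hcardm : (univ.filter (fun θ => xm θ ≠ 0 ∧ xm θ ≠ δ)).card ≤ m := by
      rcases le_or_gt (x a) (δ - x b) with h | h
      · refine filter_sub xm hxmo a (Or.inl ?_) (Or.inl rfl)
        rw [hxma, hεm, min_eq_left h]; ring
      · refine filter_sub xm hxmo b (Or.inr ?_) (Or.inr rfl)
        rw [hxmb, hεm, min_eq_right h.le]; ring
    obtain ⟨βp, hβp0, hβp1, hβpm, hβpc⟩ := ih xp hcardp hxp0 hxp1 (hsump ▸ hsum)
    obtain ⟨βm, hβm0, hβm1, hβmm, hβmc⟩ := ih xm hcardm hxm0 hxm1 (hsumm ▸ hsum)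
    set t := εm / (εp + εm) with ht
    have hεpm : 0 < εp + εm := by linarith
    have ht0 : 0 ≤ t := by positivity
    have ht1 : t ≤ 1 := by
      rw [ht, div_le_one hεpm]; linarith
    refine ⟨fun S => t * βp S + (1 - t) * βm S, ?_, ?_, ?_, ?_⟩
    · intro S
      show 0 ≤ t * βp S + (1 - t) * βm S
      have h1 := mul_nonneg ht0 (hβp0 S)
      have h2 := mul_nonneg (by linarith : (0:ℝ) ≤ 1 - t) (hβm0 S)
      linarith
    · rw [Finset.sum_add_distrib, ← Finset.mul_sum, ← Finset.mul_sum, hβp1, hβm1]; ring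
    · intro θ
      have : ∑ S, (t * βp S + (1 - t) * βm S) * (if θ ∈ S then δ else 0)
          = t * (∑ S, βp S * (if θ ∈ S then δ else 0))
            + (1 - t) * (∑ S, βm S * (if θ ∈ S then δ else 0)) := by
        rw [Finset.mul_sum, Finset.mul_sum, ← Finset.sum_add_distrib]
        refine Finset.sum_congr rfl fun S _ => by ring
      rw [this, hβpm θ, hβmm θ]
      have htmul : t * (εp + εm) = εm := by
        rw [ht, div_mul_cancel₀]; exact hεpm.ne'
      by_cases h1 : θ = a
      · subst h1; rw [hxpa, hxma]; nlinarith
      by_cases h2 : θ = b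
      · subst h2; rw [hxpb, hxmb]; nlinarith
      · rw [hxpo θ h1 h2, hxmo θ h1 h2]; ring
    · intro S hS
      by_cases hp : βp S = 0
      · have hm : βm S ≠ 0 := by
          intro hm; apply hS; show t * βp S + (1 - t) * βm S = 0; rw [hp, hm]; ring
        rw [hβmc S hm, hsumm]
      · rw [hβpc S hp, hsump]

/-- Approximation by grid-supported signaling schemes: any signaling scheme for
the prior `λ` of value `v` can be replaced by one whose posteriors all lie on
the `δ`-grid `S_δ` (all coordinates integer multiples of `δ`), decomposing the
same prior, of value at least `v - M·δ`. -/
theorem grid_signaling_approx (M r c : ℕ) (hM : 0 < M) (hr : 0 < r) (hc : 0 < c)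
    (A : Fin M → Matrix (Fin r) (Fin c) ℝ)
    (hA : ∀ θ i j, |A θ i j| ≤ 1)
    (δ : ℝ) (hδ0 : 0 < δ) (hδ1 : δ ≤ 1)
    (hint : ∃ N : ℕ, 0 < N ∧ δ = 1 / N)
    (l : Fin M → ℝ) (hl : l ∈ stdSimplex ℝ (Fin M))
    (k : ℕ) (w : Fin k → ℝ) (p : Fin k → Fin M → ℝ)
    (hw : ∀ i, 0 ≤ w i) (hp : ∀ i, p i ∈ stdSimplex ℝ (Fin M))
    (hdecomp : ∀ θ, ∑ i, w i * p i θ = l θ) :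
    ∃ (k' : ℕ) (w' : Fin k' → ℝ) (p' : Fin k' → Fin M → ℝ),
      (∀ i, 0 ≤ w' i) ∧ (∀ i, p' i ∈ stdSimplex ℝ (Fin M)) ∧
      (∀ i θ, ∃ z : ℤ, p' i θ = z * δ) ∧
      (∀ θ, ∑ i, w' i * p' i θ = l θ) ∧
      (∑ i, w i * gameVal M r c A (p i)) - M * δ ≤
        ∑ i, w' i * gameVal M r c A (p' i) := by
  classical
  obtain ⟨N, hN0, hNδ⟩ := hint
  have hNR : (0:ℝ) < N := by exact_mod_cast hN0
  have hδN : δ * N = 1 := by rw [hNδ]; field_simp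
  set q : Fin k → Fin M → ℝ := fun i φ => (⌊p i φ * N⌋ : ℝ) * δ with hq
  set rr : Fin k → Fin M → ℝ := fun i φ => p i φ - q i φ with hrrdef
  have hq0 : ∀ i φ, 0 ≤ q i φ := by
    intro i φ
    have h1 : (0:ℤ) ≤ ⌊p i φ * N⌋ := Int.floor_nonneg.2 (mul_nonneg ((hp i).1 φ) hNR.le)
    have h2 : (0:ℝ) ≤ (⌊p i φ * N⌋ : ℝ) := by exact_mod_cast h1
    exact mul_nonneg h2 hδ0.le
  have hrr0 : ∀ i φ, 0 ≤ rr i φ := by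
    intro i φ
    have h1 : (⌊p i φ * N⌋ : ℝ) ≤ p i φ * N := Int.floor_le _
    have h3 : p i φ * N * δ = p i φ := by
      rw [mul_assoc, mul_comm (N:ℝ) δ, hδN, mul_one]
    simp only [hrrdef, hq]
    nlinarith [mul_le_mul_of_nonneg_right h1 hδ0.le]
  have hrr1 : ∀ i φ, rr i φ ≤ δ := by
    intro i φ
    have h1 : p i φ * N < (⌊p i φ * N⌋ : ℝ) + 1 := Int.lt_floor_add_one _
    have h3 : p i φ * N * δ = p i φ := by
      rw [mul_assoc, mul_comm (N:ℝ) δ, hδN, mul_one]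
    simp only [hrrdef, hq]
    nlinarith [mul_le_mul_of_nonneg_right h1.le hδ0.le]
  have hsumrr : ∀ i, ∑ φ, rr i φ = 1 - ∑ φ, q i φ := by
    intro i
    simp only [hrrdef]
    rw [Finset.sum_sub_distrib, (hp i).2]
  have hintr : ∀ i, ∃ n : ℤ, ∑ φ, rr i φ = n * δ := by
    intro i
    refine ⟨N - ∑ φ, ⌊p i φ * N⌋, ?_⟩
    rw [hsumrr i]
    push_cast
    rw [sub_mul, Finset.sum_mul]
    simp only [hq]
    rw [mul_comm (N:ℝ) δ, hδN]
  have H : ∀ i, ∃ β : Finset (Fin M) → ℝ, (∀ S, 0 ≤ β S) ∧ (∑ S, β S = 1) ∧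
      (∀ θ, ∑ S, β S * (if θ ∈ S then δ else 0) = rr i θ) ∧
      (∀ S, β S ≠ 0 → (S.card : ℝ) * δ = ∑ θ, rr i θ) := fun i =>
    hyper_aux M δ hδ0 _ (rr i) le_rfl (hrr0 i) (hrr1 i) (hintr i)
  choose β hβ0 hβ1 hβm hβc using H
  set v : Fin k → Finset (Fin M) → Fin M → ℝ := fun i S φ =>
    if β i S = 0 then (if φ = ⟨0, hM⟩ then 1 else 0)
    else q i φ + (if φ ∈ S then δ else 0) with hv
  set e := (Fintype.equivFin (Fin k × Finset (Fin M))).symm with he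
  refine ⟨Fintype.card (Fin k × Finset (Fin M)),
    fun j => w (e j).1 * β (e j).1 (e j).2,
    fun j => v (e j).1 (e j).2, ?_, ?_, ?_, ?_, ?_⟩
  · intro j
    exact mul_nonneg (hw _) (hβ0 _ _)
  · intro j
    set i := (e j).1; set S := (e j).2
    show v i S ∈ stdSimplex ℝ (Fin M)
    by_cases hβz : β i S = 0
    · constructor
      · intro φ; simp only [hv, hβz, if_pos rfl]; split_ifs <;> norm_num
      · simp only [hv, hβz, if_pos rfl]
        simp
    · constructor
      · intro φ
        simp only [hv, if_neg hβz]
        have := hq0 i φ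
        positivity
      · simp only [hv, if_neg hβz]
        rw [Finset.sum_add_distrib]
        have h1 : ∑ φ : Fin M, (if φ ∈ S then δ else 0) = (S.card : ℝ) * δ := by
          rw [Finset.sum_ite_mem, Finset.univ_inter, Finset.sum_const, nsmul_eq_mul]
        rw [h1, hβc i S hβz, hsumrr i]
        ring
  · intro j θ
    set i := (e j).1; set S := (e j).2
    show ∃ z : ℤ, v i S θ = z * δ
    by_cases hβz : β i S = 0
    · simp only [hv, hβz, if_pos rfl]
      by_cases hθ : θ = ⟨0, hM⟩
      · exact ⟨N, by rw [if_pos hθ, mul_comm]; exact_mod_cast hδN.symm⟩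
      · exact ⟨0, by rw [if_neg hθ]; simp⟩
    · refine ⟨⌊p i θ * N⌋ + (if θ ∈ S then 1 else 0), ?_⟩
      simp only [hv, if_neg hβz, hq]
      push_cast
      split_ifs <;> ring
  · intro θ
    rw [Equiv.sum_comp e (fun x : Fin k × Finset (Fin M) =>
      w x.1 * β x.1 x.2 * v x.1 x.2 θ), Fintype.sum_prod_type]
    rw [← hdecomp θ]
    refine Finset.sum_congr rfl fun i _ => ?_
    have hinner : ∑ S, β i S * v i S θ = p i θ := by
      have hterm : ∀ S, β i S * v i S θ =
          β i S * (q i θ + (if θ ∈ S then δ else 0)) := by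
        intro S
        by_cases hβz : β i S = 0
        · rw [hβz, zero_mul, zero_mul]
        · simp only [hv, if_neg hβz]
      rw [Finset.sum_congr rfl (fun S _ => hterm S)]
      have : ∑ S, β i S * (q i θ + (if θ ∈ S then δ else 0))
          = (∑ S, β i S) * q i θ + ∑ S, β i S * (if θ ∈ S then δ else 0) := by
        rw [Finset.sum_mul, ← Finset.sum_add_distrib]
        refine Finset.sum_congr rfl fun S _ => by ring
      rw [this, hβ1 i, hβm i θ, one_mul]
      simp only [hrrdef]; ring
    calc ∑ S, w i * β i S * v i S θ = w i * ∑ S, β i S * v i S θ := by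
          rw [Finset.mul_sum]; refine Finset.sum_congr rfl fun S _ => by ring
      _ = w i * p i θ := by rw [hinner]
  · -- value inequality
    have hwsum : ∑ i, w i = 1 := by
      have h1 : ∑ θ, l θ = 1 := hl.2
      rw [← h1]
      rw [Finset.sum_congr rfl (fun θ _ => (hdecomp θ).symm), Finset.sum_comm]
      refine Finset.sum_congr rfl fun i _ => ?_
      rw [← Finset.mul_sum, (hp i).2, mul_one]
    rw [Equiv.sum_comp e (fun x : Fin k × Finset (Fin M) =>
      w x.1 * β x.1 x.2 * gameVal M r c A (v x.1 x.2)), Fintype.sum_prod_type]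
    have hkey : ∀ i, w i * gameVal M r c A (p i) - w i * (M * δ) ≤
        ∑ S, w i * β i S * gameVal M r c A (v i S) := by
      intro i
      set D : Finset (Fin M) → ℝ :=
        fun S => ∑ φ, (if φ ∈ S then δ - rr i φ else rr i φ) with hD
      have key1 : ∀ S, β i S * (gameVal M r c A (p i) - D S) ≤
          β i S * gameVal M r c A (v i S) := by
        intro S
        by_cases hβz : β i S = 0
        · rw [hβz, zero_mul, zero_mul]
        · refine mul_le_mul_of_nonneg_left ?_ (hβ0 i S)
          have hlip := gv_lipschitz M r c hr hc A hA (p i) (v i S)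
          have habs : ∑ φ, |p i φ - v i S φ| = D S := by
            refine Finset.sum_congr rfl fun φ _ => ?_
            simp only [hv, if_neg hβz]
            have : p i φ - (q i φ + (if φ ∈ S then δ else 0))
                = rr i φ - (if φ ∈ S then δ else 0) := by
              simp only [hrrdef]; ring
            rw [this]
            by_cases hφ : φ ∈ S
            · rw [if_pos hφ, if_pos hφ, abs_sub_comm, abs_of_nonneg (by
                have := hrr1 i φ; linarith)]
            · rw [if_neg hφ, if_neg hφ, sub_zero,
                abs_of_nonneg (hrr0 i φ)]
          rw [habs] at hlip
          linarith
      have key2 : ∑ S, β i S * D S ≤ M * δ := by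
        have hswap : ∑ S, β i S * D S
            = ∑ φ, ∑ S, β i S * (if φ ∈ S then δ - rr i φ else rr i φ) := by
          simp only [hD]
          rw [Finset.sum_comm]
          refine Finset.sum_congr rfl fun S _ => (Finset.mul_sum _ _ _)
        rw [hswap]
        have hinner : ∀ φ, ∑ S, β i S * (if φ ∈ S then δ - rr i φ else rr i φ) ≤ δ := by
          intro φ
          set m := ∑ S, β i S * (if φ ∈ S then (1:ℝ) else 0) with hm
          have hδm : δ * m = rr i φ := by
            rw [hm, Finset.mul_sum, ← hβm i φ]
            refine Finset.sum_congr rfl fun S _ => ?_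
            split_ifs <;> ring
          have hsplit : ∑ S, β i S * (if φ ∈ S then δ - rr i φ else rr i φ)
              = rr i φ * (∑ S, β i S) + (δ - 2 * rr i φ) * m := by
            rw [hm, Finset.mul_sum, Finset.mul_sum, ← Finset.sum_add_distrib]
            refine Finset.sum_congr rfl fun S _ => ?_
            split_ifs <;> ring
          rw [hsplit, hβ1 i, mul_one]
          have hrm : rr i φ = δ * m := hδm.symm
          rw [hrm]
          nlinarith [mul_nonneg hδ0.le (sq_nonneg (1 - 2 * m))]
        calc ∑ φ, ∑ S, β i S * (if φ ∈ S then δ - rr i φ else rr i φ)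
            ≤ ∑ _φ : Fin M, δ := Finset.sum_le_sum fun φ _ => hinner φ
          _ = M * δ := by rw [Finset.sum_const, Finset.card_univ, Fintype.card_fin,
              nsmul_eq_mul]
      have hmid : gameVal M r c A (p i) - M * δ ≤
          ∑ S, β i S * gameVal M r c A (v i S) := by
        have h1 : ∑ S, β i S * (gameVal M r c A (p i) - D S)
            = gameVal M r c A (p i) - ∑ S, β i S * D S := by
          have h1' : ∑ S, β i S * (gameVal M r c A (p i) - D S)
              = (∑ S, β i S) * gameVal M r c A (p i) - ∑ S, β i S * D S := by
            rw [Finset.sum_mul, ← Finset.sum_sub_distrib]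
            refine Finset.sum_congr rfl fun S _ => by ring
          rw [h1', hβ1 i, one_mul]
        have h2 := Finset.sum_le_sum fun S (_ : S ∈ univ) => key1 S
        rw [h1] at h2
        linarith
      calc w i * gameVal M r c A (p i) - w i * (M * δ)
          = w i * (gameVal M r c A (p i) - M * δ) := by ring
        _ ≤ w i * ∑ S, β i S * gameVal M r c A (v i S) :=
            mul_le_mul_of_nonneg_left hmid (hw i)
        _ = ∑ S, w i * β i S * gameVal M r c A (v i S) := by
            rw [Finset.mul_sum]
            refine Finset.sum_congr rfl fun S _ => by ring
    have hfinal := Finset.sum_le_sum fun i (_ : i ∈ univ) => hkey i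
    rw [Finset.sum_sub_distrib] at hfinal
    have : ∑ i, w i * (M * δ) = M * δ := by
      rw [← Finset.sum_mul, hwsum, one_mul]
    linarith
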